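/- Let p be a prime element of 𝒪 with p ≡ 1 (mod 3), let k > 1 be an integer and write k = h + 3l with h ∈ {0,1,2} and l ≥ 0 integers, and let z, b ∈ 𝒪 with zb coprime to p. Then ∑_{x (p^k)*} (x/p^k)₃ · e(b·x⁻¹/p^k) · T(z·x, 0, p^h) = 0. -/

import Mathlib

noncomputable section

namespace CubicSeries

open scoped Classical

def ω : ℂ := Complex.exp (2 * Real.pi * Complex.I / 3)

def O : Subring ℂ := Subring.closure {ω}

abbrev OK : Type _ := O

def δ : ℂ := ω - ω ^ 2

def eC (z : ℂ) : ℂ :=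
  Complex.exp (2 * Real.pi * Complex.I * (z / δ + (starRingEnd ℂ) (z / δ)))

def rep {I : Ideal OK} (x : OK ⧸ I) : OK :=
  Function.surjInv Ideal.Quotient.mk_surjective x

/-- `N(c) = |𝒪/(c)|`, the absolute norm. -/
def Nm (c : OK) : ℕ := Nat.card (OK ⧸ Ideal.span {c})

/-- `φ(c) = |(𝒪/(c))ˣ|`. -/
def totient (c : OK) : ℕ := Nat.card ((OK ⧸ Ideal.span {c})ˣ)

/-- a multiplicative inverse modulo `c` (an arbitrary element when `x` is not invertible). -/
def invMod (c x : OK) : OK :=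
  rep (Ring.inverse (Ideal.Quotient.mk (Ideal.span {c}) x))

def T (A B c : OK) : ℂ :=
  ∑ᶠ x : OK ⧸ Ideal.span {c}, eC (((A * rep x ^ 3 + B * rep x : OK) : ℂ) / (c : ℂ))

/-- The cubic residue symbol `(x/π)₃` for a prime element `π` not dividing `3`:
the unique cube root of unity congruent to `x^{(N(π)-1)/3}` mod `π`, and `0` if `π ∣ x`. -/
def cubicCharP (π x : OK) : OK :=
  if h : ∃ ζ : OK, ζ ^ 3 = 1 ∧ π ∣ ζ - x ^ ((Nm π - 1) / 3) ∧ ¬ π ∣ x then h.choose else 0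

/-- The cubic residue symbol `(x/c)₃` for `c` coprime to `3`, defined via a factorization of
`c` into a unit times prime elements (with multiplicity). -/
def cubicChar (c x : OK) : OK :=
  if h : ∃ fs : OKˣ × Multiset OK, (∀ π ∈ fs.2, Prime π) ∧ c = (fs.1 : OK) * fs.2.prod
  then (h.choose.2.map fun π => cubicCharP π x).prod
  else 0

/-- The cubic Gauss sum `g(a,c) = ∑_{x (c)*} (x/c)₃ e(ax/c)`. -/
def gaussSum (a c : OK) : ℂ :=
  ∑ᶠ u : (OK ⧸ Ideal.span {c})ˣ,
    ((cubicChar c (rep u.val) : OK) : ℂ) * eC (((a * rep u.val : OK) : ℂ) / (c : ℂ))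

/-- The Möbius function: `μ(c) = (−1)^r` if `(c)` is a product of `r` distinct prime ideals,
and `μ(c) = 0` otherwise. -/
def moebius (c : OK) : ℤ :=
  if h : ∃ s : Finset (Ideal OK), (∀ P ∈ s, Prime P) ∧ Ideal.span {c} = ∏ P ∈ s, P
  then (-1) ^ h.choose.card
  else 0

/-- `p^n` modulo `c`, where a negative exponent means the inverse of `p^{-n}` mod `c`. -/
def ppow (c p : OK) (n : ℤ) : OK :=
  if 0 ≤ n then p ^ n.toNat else invMod c (p ^ (-n).toNat)

/-- A choice of generator of a (principal) ideal. -/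
def gen (J : Ideal OK) : OK := if h : ∃ q : OK, Ideal.span {q} = J then h.choose else 0

/-- A choice of cofactor: `cofactor c q` is a `d` with `c = q·d`, when one exists. -/
def cofactor (c q : OK) : OK := if h : ∃ d : OK, c = q * d then h.choose else 0


lemma omega_cube : ω ^ 3 = 1 := by
  rw [ω, ← Complex.exp_nat_mul]
  push_cast
  rw [show (3:ℂ) * (2 * Real.pi * Complex.I / 3) = 2 * Real.pi * Complex.I by ring]
  exact Complex.exp_two_pi_mul_I

lemma two_pi_I_ne_zero : 2 * (Real.pi:ℂ) * Complex.I ≠ 0 := by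
  simp [Real.pi_ne_zero, Complex.I_ne_zero, Complex.ofReal_ne_zero]

lemma omega_ne_one : ω ≠ 1 := by
  intro h
  rw [ω, Complex.exp_eq_one_iff] at h
  rcases h with ⟨n, hn⟩
  have h1 : (2 * (Real.pi:ℂ) * Complex.I) * 1 = (2 * (Real.pi:ℂ) * Complex.I) * (3 * n) := by
    linear_combination 3 * hn
  have h2 : (1:ℂ) = 3 * n := mul_left_cancel₀ two_pi_I_ne_zero h1
  have : (1:ℤ) = 3 * n := by exact_mod_cast h2
  omega

lemma omega_ne_zero : ω ≠ 0 := Complex.exp_ne_zero _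

lemma omega_sq : ω ^ 2 = -1 - ω := by
  have h3 := omega_cube
  have h : (ω - 1) * (ω ^ 2 + ω + 1) = 0 := by linear_combination h3
  rcases mul_eq_zero.mp h with h1 | h2
  · exact absurd (sub_eq_zero.mp h1) omega_ne_one
  · linear_combination h2

lemma conj_omega : (starRingEnd ℂ) ω = ω ^ 2 := by
  have h1 : ω * (starRingEnd ℂ) ω = 1 := by
    rw [ω, ← Complex.exp_conj, ← Complex.exp_add]
    rw [show (2 * Real.pi * Complex.I / 3) + (starRingEnd ℂ) (2 * Real.pi * Complex.I / 3) = 0 by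
      simp [map_div₀, Complex.conj_I, Complex.conj_ofReal, map_ofNat]; ring]
    exact Complex.exp_zero
  calc (starRingEnd ℂ) ω = ω ^ 3 * (starRingEnd ℂ) ω := by rw [omega_cube]; ring
  _ = ω ^ 2 := by rw [show ω^3 * (starRingEnd ℂ) ω = ω^2 * (ω * (starRingEnd ℂ) ω) by ring, h1, mul_one]

lemma delta_ne_zero : δ ≠ 0 := by
  rw [δ]
  intro h
  have : ω * (1 - ω) = 0 := by linear_combination h
  rcases mul_eq_zero.mp this with h1 | h2
  · exact omega_ne_zero h1
  · exact omega_ne_one (by linear_combination -h2)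

lemma conj_delta : (starRingEnd ℂ) δ = -δ := by
  rw [δ, map_sub, map_pow, conj_omega]
  linear_combination -ω * omega_cube

/-- Key trace computation: for real u v, (u+vω)/δ + conj = v. -/
lemma trace_formula (u v : ℝ) :
    ((u:ℂ) + v * ω) / δ + (starRingEnd ℂ) (((u:ℂ) + v * ω) / δ) = v := by
  rw [map_div₀, conj_delta, map_add, map_mul, conj_omega,
    Complex.conj_ofReal, Complex.conj_ofReal]
  field_simp [delta_ne_zero]
  rw [δ]; ring

lemma eC_real (u v : ℝ) : eC ((u:ℂ) + v * ω) = Complex.exp (2 * Real.pi * Complex.I * v) := by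
  rw [eC, trace_formula]

lemma mem_O_iff {x : ℂ} : x ∈ O ↔ ∃ m n : ℤ, x = m + n * ω := by
  constructor
  · intro hx
    induction hx using Subring.closure_induction with
    | mem y hy => exact ⟨0, 1, by simp [Set.mem_singleton_iff.mp hy]⟩
    | zero => exact ⟨0, 0, by simp⟩
    | one => exact ⟨1, 0, by simp⟩
    | add a b _ _ ha hb =>
      obtain ⟨m, n, rfl⟩ := ha; obtain ⟨m', n', rfl⟩ := hb
      exact ⟨m + m', n + n', by push_cast; ring⟩
    | neg a _ ha =>
      obtain ⟨m, n, rfl⟩ := ha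
      exact ⟨-m, -n, by push_cast; ring⟩
    | mul a b _ _ ha hb =>
      obtain ⟨m, n, rfl⟩ := ha; obtain ⟨m', n', rfl⟩ := hb
      refine ⟨m * m' - n * n', m * n' + n * m' - n * n', ?_⟩
      push_cast
      linear_combination (n : ℂ) * n' * omega_sq
  · rintro ⟨m, n, rfl⟩
    have hω : ω ∈ O := Subring.subset_closure rfl
    exact add_mem (intCast_mem O m) (mul_mem (intCast_mem O n) hω)

def Ω : OK := ⟨ω, Subring.subset_closure rfl⟩

lemma Omega_sq : Ω ^ 2 = -1 - Ω := by
  apply Subtype.ext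
  push_cast
  exact omega_sq

instance : Module.Finite ℤ OK := by
  rw [Module.finite_def]
  refine ⟨{1, Ω}, ?_⟩
  rw [eq_top_iff]
  rintro x -
  obtain ⟨m, n, hx⟩ := mem_O_iff.mp x.2
  have : x = m • (1 : OK) + n • Ω := by
    apply Subtype.ext
    push_cast
    simpa [show ((Ω : OK) : ℂ) = ω from rfl] using hx
  rw [this]
  exact add_mem (Submodule.smul_mem _ _ (Submodule.subset_span (by simp)))
    (Submodule.smul_mem _ _ (Submodule.subset_span (by simp)))

instance : Module.Free ℤ OK := Module.free_of_finite_type_torsion_free'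

def quotFintype {c : OK} (hc : c ≠ 0) : Fintype (OK ⧸ Ideal.span {c}) :=
  have := Ideal.finiteQuotientOfFreeOfNeBot (Ideal.span {c} : Ideal OK) (by
    rw [Ne, Ideal.span_singleton_eq_bot]; exact hc)
  Fintype.ofFinite _

lemma eC_add (x y : ℂ) : eC (x + y) = eC x * eC y := by
  rw [eC, eC, eC, ← Complex.exp_add]
  congr 1
  rw [add_div, map_add]
  ring

lemma eC_zero : eC 0 = 1 := by
  rw [eC]; simp

lemma eC_intOK (o : OK) : eC o = 1 := by
  obtain ⟨m, n, ho⟩ := mem_O_iff.mp o.2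
  have : (o : ℂ) = (m : ℝ) + (n : ℝ) * ω := by rw [ho]; push_cast; ring
  rw [this, eC_real]
  rw [show 2 * (Real.pi:ℂ) * Complex.I * ((n:ℝ):ℂ) = (n:ℂ) * (2 * Real.pi * Complex.I) by push_cast; ring]
  exact Complex.exp_int_mul_two_pi_mul_I n

/-- Division of elements of OK in ℂ has rational coordinates. -/
lemma div_rat_coords (a c : OK) (hc : c ≠ 0) :
    ∃ u v : ℚ, (a : ℂ) / (c : ℂ) = (u : ℝ) + (v : ℝ) * ω := by
  obtain ⟨m, n, ha⟩ := mem_O_iff.mp a.2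
  obtain ⟨m', n', hc'⟩ := mem_O_iff.mp c.2
  have hcC : (c : ℂ) ≠ 0 := by
    intro h; apply hc; exact Subtype.ext (by simpa using h)
  have hconj : (starRingEnd ℂ) (c : ℂ) = (m' : ℂ) + n' * ω ^ 2 := by
    rw [hc', map_add, map_mul, conj_omega, map_intCast, map_intCast]
  have hNr : (c : ℂ) * ((m' : ℂ) + n' * ω ^ 2) = ((m'^2 - m'*n' + n'^2 : ℤ) : ℂ) := by
    rw [hc']
    push_cast
    linear_combination ((m' : ℂ) * n') * omega_sq + (n':ℂ)^2 * omega_cube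
  set N : ℤ := m'^2 - m'*n' + n'^2 with hN
  have hNne : (N : ℂ) ≠ 0 := by
    rw [← hNr]
    apply mul_ne_zero hcC
    rw [← hconj]
    simpa using hcC
  refine ⟨(m * m' + n * n' - m * n' : ℤ) / N, (n * m' - m * n' : ℤ) / N, ?_⟩
  have key : (a : ℂ) * ((m' : ℂ) + n' * ω ^ 2) =
      ((m * m' + n * n' - m * n' : ℤ) : ℂ) + ((n * m' - m * n' : ℤ) : ℂ) * ω := by
    rw [ha]; push_cast
    linear_combination ((m:ℂ)*n') * omega_sq + (n:ℂ)*n' * omega_cube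
  rw [div_eq_iff hcC]
  push_cast
  push_cast at key hNr
  linear_combination (norm := (field_simp; ring)) ((c:ℂ) * key - (a:ℂ) * hNr) / (N:ℂ)

lemma rep_mk {I : Ideal OK} (x : OK ⧸ I) : Ideal.Quotient.mk I (rep x) = x :=
  Function.surjInv_eq Ideal.Quotient.mk_surjective x

lemma mk_eq_mk_iff {c a b : OK} :
    Ideal.Quotient.mk (Ideal.span {c}) a = Ideal.Quotient.mk (Ideal.span {c}) b ↔ c ∣ a - b := by
  rw [Ideal.Quotient.eq, Ideal.mem_span_singleton]

lemma coe_ne_zero {c : OK} (hc : c ≠ 0) : (c : ℂ) ≠ 0 := by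
  intro h; exact hc (Subtype.ext (by simpa using h))

lemma eC_div_congr {c a a' : OK} (hc : c ≠ 0) (h : c ∣ a - a') :
    eC ((a : ℂ) / (c : ℂ)) = eC ((a' : ℂ) / (c : ℂ)) := by
  obtain ⟨d, hd⟩ := h
  have ha : (a : ℂ) = (a' : ℂ) + (c : ℂ) * (d : ℂ) := by
    have : a = a' + c * d := by linear_combination hd
    rw [this]; push_cast; ring
  rw [ha, add_div, mul_div_cancel_left₀ _ (coe_ne_zero hc), eC_add, eC_intOK d, mul_one]

lemma int_of_exp (v : ℚ) (h : Complex.exp (2*Real.pi*Complex.I*((v:ℝ):ℂ)) = 1) :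
    ∃ n : ℤ, (v:ℚ) = n := by
  rw [Complex.exp_eq_one_iff] at h
  obtain ⟨n, hn⟩ := h
  refine ⟨n, ?_⟩
  have h2 : ((v:ℝ):ℂ) * (2*Real.pi*Complex.I) = (n:ℂ) * (2*Real.pi*Complex.I) := by
    linear_combination hn
  have := mul_right_cancel₀ two_pi_I_ne_zero h2
  exact_mod_cast this

lemma exists_nontrivial (p a : OK) (hp0 : p ≠ 0) (hpa : ¬ p ∣ a) :
    ∃ s0 : OK, eC (((a * s0 : OK) : ℂ) / (p : ℂ)) ≠ 1 := by
  by_contra hcon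
  push_neg at hcon
  obtain ⟨u, v, huv⟩ := div_rat_coords a p hp0
  have h1 := hcon 1
  have h2 := hcon Ω
  apply hpa
  -- evaluate h1
  have e1 : ((a * 1 : OK) : ℂ) / (p : ℂ) = (u:ℝ) + (v:ℝ) * ω := by
    rw [mul_one]; exact huv
  rw [e1, eC_real] at h1
  obtain ⟨n, hn⟩ := int_of_exp v h1
  -- evaluate h2
  have e2 : ((a * Ω : OK) : ℂ) / (p : ℂ) = ((-v : ℚ):ℝ) + ((u - v : ℚ):ℝ) * ω := by
    have hco : ((a * Ω : OK) : ℂ) = (a : ℂ) * ω := by push_cast; rfl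
    rw [hco, mul_div_right_comm, huv]
    push_cast
    linear_combination (v:ℂ) * omega_sq
  rw [e2, eC_real] at h2
  obtain ⟨n', hn'⟩ := int_of_exp _ h2
  have hu : u = n' + n := by rw [← hn]; linarith [hn'.symm ▸ (rfl : u - v = u - v)]
  refine ⟨((n' + n : ℤ) : OK) + (n : ℤ) * Ω, ?_⟩
  apply Subtype.ext
  have hap : (a : ℂ) = (p : ℂ) * (((u:ℝ):ℂ) + ((v:ℝ):ℂ) * ω) := by
    rw [← huv, mul_div_cancel₀ _ (coe_ne_zero hp0)]
  rw [hap]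
  push_cast
  rw [hu, hn, show ((Ω : OK) : ℂ) = ω from rfl]
  push_cast
  ring


lemma char_sum (p a : OK) (hp0 : p ≠ 0) (hpa : ¬ p ∣ a) :
    ∑ᶠ s : OK ⧸ Ideal.span {p}, eC (((a * rep s : OK) : ℂ) / (p : ℂ)) = 0 := by
  letI : Fintype (OK ⧸ Ideal.span {p}) := quotFintype hp0
  rw [finsum_eq_sum_of_fintype]
  obtain ⟨s0, hs0⟩ := exists_nontrivial p a hp0 hpa
  set f : OK ⧸ Ideal.span {p} → ℂ := fun s => eC (((a * rep s : OK) : ℂ) / (p : ℂ)) with hf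
  set c0 : ℂ := eC (((a * s0 : OK) : ℂ) / (p : ℂ)) with hc0
  have shift : ∀ s : OK ⧸ Ideal.span {p},
      f (Ideal.Quotient.mk _ s0 + s) = c0 * f s := by
    intro s
    have hcong : p ∣ (a * rep (Ideal.Quotient.mk (Ideal.span {p}) s0 + s)) - (a * s0 + a * rep s) := by
      have h1 : Ideal.Quotient.mk (Ideal.span {p}) (rep (Ideal.Quotient.mk (Ideal.span {p}) s0 + s))
          = Ideal.Quotient.mk (Ideal.span {p}) (s0 + rep s) := by
        rw [rep_mk, RingHom.map_add, rep_mk]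
      have h2 := mk_eq_mk_iff.mp h1
      have : (a * rep (Ideal.Quotient.mk (Ideal.span {p}) s0 + s)) - (a * s0 + a * rep s)
          = a * ((rep (Ideal.Quotient.mk (Ideal.span {p}) s0 + s)) - (s0 + rep s)) := by ring
      rw [this]
      exact Dvd.dvd.mul_left h2 a
    have := eC_div_congr hp0 hcong
    rw [hf]
    simp only []
    rw [this]
    have : ((a * s0 + a * rep s : OK) : ℂ) = ((a * s0 : OK) : ℂ) + ((a * rep s : OK) : ℂ) := by
      push_cast; ring
    rw [this, add_div, eC_add]
  have key : ∑ s : OK ⧸ Ideal.span {p}, f s = c0 * ∑ s : OK ⧸ Ideal.span {p}, f s := by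
    rw [Finset.mul_sum]
    calc ∑ s : OK ⧸ Ideal.span {p}, f s
        = ∑ s : OK ⧸ Ideal.span {p}, f ((Equiv.addLeft (Ideal.Quotient.mk (Ideal.span {p}) s0)) s) := by
          rw [Equiv.sum_comp (Equiv.addLeft (Ideal.Quotient.mk (Ideal.span {p}) s0)) f]
      _ = ∑ s : OK ⧸ Ideal.span {p}, c0 * f s := by
          apply Finset.sum_congr rfl
          intro s _
          exact shift s
  have : (c0 - 1) * ∑ s : OK ⧸ Ideal.span {p}, f s = 0 := by linear_combination -key
  rcases mul_eq_zero.mp this with h | h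
  · exact absurd (sub_eq_zero.mp h) hs0
  · exact h

lemma invMod_spec (c : OK) (u : (OK ⧸ Ideal.span {c})ˣ) :
    Ideal.Quotient.mk (Ideal.span {c}) (invMod c (rep u.val)) = ↑u⁻¹ := by
  rw [invMod, rep_mk, rep_mk, Ring.inverse_unit]

lemma not_dvd_of_unit_mk {p : OK} (hp : Prime p) {k : ℕ} (hk : 1 ≤ k) {a : OK}
    (h : IsUnit (Ideal.Quotient.mk (Ideal.span {p ^ k}) a)) : ¬ p ∣ a := by
  intro hpa
  obtain ⟨u, hu⟩ := h
  have h1 : Ideal.Quotient.mk (Ideal.span {p ^ k}) (a * rep (u⁻¹).val)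
      = Ideal.Quotient.mk (Ideal.span {p ^ k}) 1 := by
    rw [RingHom.map_mul, ← hu, rep_mk, map_one]
    exact u.mul_inv
  have h2 : p ^ k ∣ a * rep (u⁻¹).val - 1 := mk_eq_mk_iff.mp h1
  have h3 : p ∣ a * rep (u⁻¹).val - 1 := dvd_trans (dvd_pow_self p (by omega)) h2
  have h4 : p ∣ (1 : OK) := by
    have : (1 : OK) = a * rep (u⁻¹).val - (a * rep (u⁻¹).val - 1) := by ring
    rw [this]
    exact dvd_sub (Dvd.dvd.mul_right hpa _) h3
  exact hp.not_unit (isUnit_of_dvd_one h4)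

lemma exists_inv_mod {p : OK} (hp : Prime p) {a : OK} (ha : ¬ p ∣ a) :
    ∃ w : OK, p ∣ a * w - 1 := by
  letI : Fintype (OK ⧸ Ideal.span {p}) := quotFintype hp.ne_zero
  haveI : (Ideal.span {p} : Ideal OK).IsPrime := (Ideal.span_singleton_prime hp.ne_zero).mpr hp
  haveI : IsDomain (OK ⧸ Ideal.span {p}) := Ideal.Quotient.isDomain _
  have hfield := Finite.isField_of_domain (OK ⧸ Ideal.span {p})
  have hane : Ideal.Quotient.mk (Ideal.span {p}) a ≠ 0 := by
    rw [Ne, Ideal.Quotient.eq_zero_iff_mem, Ideal.mem_span_singleton]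
    exact ha
  obtain ⟨b, hb⟩ := hfield.mul_inv_cancel hane
  refine ⟨rep b, ?_⟩
  rw [← mk_eq_mk_iff]
  rw [RingHom.map_mul, rep_mk, map_one]
  exact hb

lemma Omega_cube : Ω ^ 3 = 1 := by
  apply Subtype.ext
  push_cast
  exact omega_cube

lemma cube_root_cases {ζ : OK} (h : ζ ^ 3 = 1) : ζ = 1 ∨ ζ = Ω ∨ ζ = Ω ^ 2 := by
  have hC : (ζ : ℂ) ^ 3 = 1 := by exact_mod_cast congrArg (Subtype.val) h
  have hfac : ((ζ:ℂ) - 1) * ((ζ:ℂ) - ω) * ((ζ:ℂ) - ω^2) = 0 := by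
    linear_combination hC + ((ζ:ℂ) - (ζ:ℂ)^2) * omega_sq + ((ζ:ℂ) - 1) * omega_cube
  rcases mul_eq_zero.mp hfac with h12 | h3
  · rcases mul_eq_zero.mp h12 with h1 | h2
    · left; exact Subtype.ext (by simpa [sub_eq_zero] using h1)
    · right; left
      apply Subtype.ext
      rw [show ((Ω : OK) : ℂ) = ω from rfl]
      exact sub_eq_zero.mp h2
  · right; right
    apply Subtype.ext
    rw [show ((Ω ^ 2 : OK) : ℂ) = ω ^ 2 by push_cast; rfl]
    exact sub_eq_zero.mp h3

lemma cube_root_unique {p : OK} (hp : Prime p) (h3 : ¬ p ∣ (3 : OK)) {ζ ζ' : OK}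
    (hz : ζ ^ 3 = 1) (hz' : ζ' ^ 3 = 1) (hd : p ∣ ζ - ζ') : ζ = ζ' := by
  have hΩ2 := Omega_sq
  have hΩ3 := Omega_cube
  have key : ∀ η η' : OK, η ^ 3 = 1 → η' ^ 3 = 1 → η ≠ η' → ∃ d : OK, (η - η') * d = 3 := by
    intro η η' h1 h2 hne
    rcases cube_root_cases h1 with rfl | rfl | rfl <;>
      rcases cube_root_cases h2 with rfl | rfl | rfl
    · exact absurd rfl hne
    · exact ⟨1 - Ω^2, by linear_combination hΩ3 - hΩ2⟩
    · exact ⟨1 - Ω, by linear_combination hΩ3 - hΩ2⟩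
    · exact ⟨Ω^2 - 1, by linear_combination hΩ3 - hΩ2⟩
    · exact absurd rfl hne
    · exact ⟨Ω^2 - Ω, by linear_combination (2-Ω)*hΩ3 - hΩ2⟩
    · exact ⟨Ω - 1, by linear_combination hΩ3 - hΩ2⟩
    · exact ⟨Ω - Ω^2, by linear_combination (2-Ω)*hΩ3 - hΩ2⟩
    · exact absurd rfl hne
  by_contra hne
  obtain ⟨d, hd3⟩ := key ζ ζ' hz hz' hne
  exact h3 (hd3 ▸ Dvd.dvd.mul_right hd d)

lemma cubicCharP_congr {p : OK} (hp : Prime p) (h3 : ¬ p ∣ (3 : OK)) {x y : OK}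
    (hxy : p ∣ x - y) : cubicCharP p x = cubicCharP p y := by
  set e := (Nm p - 1) / 3 with he
  have hpow : p ∣ x ^ e - y ^ e := dvd_trans hxy (sub_dvd_pow_sub_pow x y e)
  have hdvd_iff : p ∣ x ↔ p ∣ y := by
    constructor <;> intro h
    · have : y = x - (x - y) := by ring
      rw [this]; exact dvd_sub h hxy
    · have : x = y + (x - y) := by ring
      rw [this]; exact dvd_add h hxy
  have hiff : (∃ ζ : OK, ζ ^ 3 = 1 ∧ p ∣ ζ - x ^ e ∧ ¬ p ∣ x)
      ↔ (∃ ζ : OK, ζ ^ 3 = 1 ∧ p ∣ ζ - y ^ e ∧ ¬ p ∣ y) := by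
    constructor <;> rintro ⟨ζ, h1, h2, h4⟩
    · refine ⟨ζ, h1, ?_, fun hy => h4 (hdvd_iff.mpr hy)⟩
      have : ζ - y ^ e = (ζ - x ^ e) + (x ^ e - y ^ e) := by ring
      rw [this]; exact dvd_add h2 hpow
    · refine ⟨ζ, h1, ?_, fun hx => h4 (hdvd_iff.mp hx)⟩
      have : ζ - x ^ e = (ζ - y ^ e) - (x ^ e - y ^ e) := by ring
      rw [this]; exact dvd_sub h2 hpow
  rw [cubicCharP, cubicCharP, ← he]
  split_ifs with h1 h2 h2
  · -- both choices are cube roots congruent mod p, hence equal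
    obtain ⟨hz1, hd1, _⟩ := h1.choose_spec
    obtain ⟨hz2, hd2, _⟩ := h2.choose_spec
    apply cube_root_unique hp h3 hz1 hz2
    have : h1.choose - h2.choose = (h1.choose - x ^ e) - (h2.choose - y ^ e) - (y ^ e - x ^ e) := by
      ring
    rw [this]
    exact dvd_sub (dvd_sub hd1 hd2) (by simpa using (dvd_neg.mpr hpow))
  · exact absurd (hiff.mp h1) h2
  · exact absurd (hiff.mpr h2) h1
  · rfl

lemma T_congr {c A A' : OK} (hc : c ≠ 0) (h : c ∣ A - A') : T A 0 c = T A' 0 c := by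
  rw [T, T]
  apply finsum_congr
  intro x
  apply eC_div_congr hc
  have : A * rep x ^ 3 + 0 * rep x - (A' * rep x ^ 3 + 0 * rep x) = (A - A') * rep x ^ 3 := by
    ring
  rw [this]
  exact Dvd.dvd.mul_right h _

lemma cube_congr {c a b : OK} (h : c ∣ a - b) : c ∣ a ^ 3 - b ^ 3 :=
  dvd_trans h (sub_dvd_pow_sub_pow a b 3)

def mulEquivOfUnit {I : Ideal OK} (v : (OK ⧸ I)ˣ) : (OK ⧸ I) ≃ (OK ⧸ I) where
  toFun x := ↑v * x
  invFun x := ↑v⁻¹ * x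
  left_inv x := by simp [← mul_assoc, ← Units.val_mul]
  right_inv x := by simp [← mul_assoc, ← Units.val_mul]

lemma T_congr_sq {p A A' : OK} (hp : Prime p) (h3 : ¬ p ∣ (3 : OK)) (hA : ¬ p ∣ A)
    (h : p ∣ A - A') : T A 0 (p ^ 2) = T A' 0 (p ^ 2) := by
  have hp2 : (p ^ 2 : OK) ≠ 0 := pow_ne_zero _ hp.ne_zero
  obtain ⟨d, hd⟩ := h
  obtain ⟨a, ha⟩ := exists_inv_mod hp (show ¬ p ∣ 3 * A from fun hdvd =>
    (hp.dvd_mul.mp hdvd).elim h3 hA)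
  -- w := -(d * a) ; p ∣ 3*A*w + d
  obtain ⟨g, hg⟩ : p ∣ 3 * A * (-(d * a)) + d := by
    have : 3 * A * (-(d * a)) + d = -d * (3 * A * a - 1) := by ring
    rw [this]
    exact Dvd.dvd.mul_left ha (-d)
  set w : OK := -(d * a) with hw
  set lam : OK := 1 + p * w with hlam
  set mu : OK := 1 - p * w + p ^ 2 * w ^ 2 with hmu
  have hcube : p ^ 2 ∣ A * lam ^ 3 - A' := by
    refine ⟨g + 3 * A * w ^ 2 + A * p * w ^ 3, ?_⟩
    have hA' : A' = A - p * d := by linear_combination -hd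
    rw [hA', hlam]
    linear_combination (p : OK) * hg
  have hunit : Ideal.Quotient.mk (Ideal.span {p ^ 2}) lam *
      Ideal.Quotient.mk (Ideal.span {p ^ 2}) mu = 1 := by
    rw [← RingHom.map_mul, show (1 : OK ⧸ Ideal.span {p^2}) = Ideal.Quotient.mk _ 1 from rfl]
    rw [mk_eq_mk_iff]
    exact ⟨p * w ^ 3, by rw [hlam, hmu]; ring⟩
  set Λ : (OK ⧸ Ideal.span {p ^ 2})ˣ :=
    ⟨Ideal.Quotient.mk _ lam, Ideal.Quotient.mk _ mu, hunit, by rw [mul_comm] at hunit; exact hunit⟩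
    with hΛ
  letI : Fintype (OK ⧸ Ideal.span {p ^ 2}) := quotFintype hp2
  rw [T, T, finsum_eq_sum_of_fintype, finsum_eq_sum_of_fintype]
  rw [← Equiv.sum_comp (mulEquivOfUnit Λ)]
  apply Finset.sum_congr rfl
  intro x _
  have hrep : p ^ 2 ∣ rep ((mulEquivOfUnit Λ) x) - lam * rep x := by
    rw [← mk_eq_mk_iff, rep_mk]
    show ↑Λ * x = _
    rw [hΛ]
    show Ideal.Quotient.mk _ lam * x = _
    conv_lhs => rw [← rep_mk x]
    rw [← RingHom.map_mul]
  apply eC_div_congr hp2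
  have hc3 : p ^ 2 ∣ rep ((mulEquivOfUnit Λ) x) ^ 3 - lam ^ 3 * rep x ^ 3 := by
    have := cube_congr hrep
    simpa [mul_pow] using this
  obtain ⟨q1, hq1⟩ := hc3
  obtain ⟨q2, hq2⟩ := hcube
  refine ⟨A * q1 + q2 * rep x ^ 3, ?_⟩
  linear_combination (A : OK) * hq1 + (rep x ^ 3 : OK) * hq2


/- Statement 3 -/
theorem stmt3 (p z b : OK) (hp : Prime p) (hp3 : (3 : OK) ∣ p - 1)
    (k h l : ℕ) (hk : 1 < k) (hh : h < 3) (hdecomp : k = h + 3 * l)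
    (hzb : IsCoprime (z * b) p) :
    ∑ᶠ u : (OK ⧸ Ideal.span {p ^ k})ˣ,
      ((cubicCharP p (rep u.val) ^ k : OK) : ℂ) *
        eC (((b * invMod (p ^ k) (rep u.val) : OK) : ℂ) / ((p ^ k : OK) : ℂ)) *
        T (z * rep u.val) 0 (p ^ h) = 0 := by
  have hp0 : p ≠ 0 := hp.ne_zero
  have hpk0 : (p ^ k : OK) ≠ 0 := pow_ne_zero _ hp0
  have hk1 : 1 ≤ k := by omega
  have h3 : ¬ p ∣ (3 : OK) := by
    intro hd
    apply hp.not_unit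
    apply isUnit_of_dvd_one
    have h1 : p ∣ p - 1 := dvd_trans hd hp3
    have : (1 : OK) = p - (p - 1) := by ring
    rw [this]
    exact dvd_sub dvd_rfl h1
  have hnz : ¬ p ∣ z := fun hd => hp.not_unit (hzb.of_mul_left_left.isUnit_of_dvd' hd dvd_rfl)
  have hnb : ¬ p ∣ b := fun hd => hp.not_unit (hzb.of_mul_left_right.isUnit_of_dvd' hd dvd_rfl)
  letI : Fintype (OK ⧸ Ideal.span {p ^ k}) := quotFintype hpk0
  letI : Fintype (OK ⧸ Ideal.span {p}) := quotFintype hp0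
  rw [finsum_eq_sum_of_fintype]
  set F : (OK ⧸ Ideal.span {p ^ k})ˣ → ℂ := fun u =>
    ((cubicCharP p (rep u.val) ^ k : OK) : ℂ) *
      eC (((b * invMod (p ^ k) (rep u.val) : OK) : ℂ) / ((p ^ k : OK) : ℂ)) *
      T (z * rep u.val) 0 (p ^ h) with hF
  -- construct shifting units
  set lam : (OK ⧸ Ideal.span {p}) → OK := fun s => 1 + p ^ (k - 1) * rep s with hlam
  set mu : (OK ⧸ Ideal.span {p}) → OK := fun s => 1 - p ^ (k - 1) * rep s with hmu
  have hP2 : (p ^ k : OK) ∣ (p ^ (k - 1)) ^ 2 := by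
    rw [← pow_mul]
    exact pow_dvd_pow p (by omega)
  have hval : ∀ s, Ideal.Quotient.mk (Ideal.span {p ^ k}) (lam s) *
      Ideal.Quotient.mk (Ideal.span {p ^ k}) (mu s) = 1 := by
    intro s
    rw [← RingHom.map_mul,
      show (1 : OK ⧸ Ideal.span {p ^ k}) = Ideal.Quotient.mk (Ideal.span {p ^ k}) 1 from rfl,
      mk_eq_mk_iff]
    obtain ⟨c, hc⟩ := hP2
    exact ⟨-(c * rep s ^ 2), by rw [hlam, hmu]; simp only []; linear_combination (-(rep s:OK)^2) * hc⟩
  set ts : (OK ⧸ Ideal.span {p}) → (OK ⧸ Ideal.span {p ^ k})ˣ := fun s =>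
    ⟨Ideal.Quotient.mk _ (lam s), Ideal.Quotient.mk _ (mu s), hval s,
      by rw [mul_comm]; exact hval s⟩ with hts
  -- pointwise expansion
  have pointwise : ∀ (s : OK ⧸ Ideal.span {p}) (u : (OK ⧸ Ideal.span {p ^ k})ˣ),
      F (ts s * u) = F u *
        eC (((-(b * invMod (p ^ k) (rep u.val)) * rep s : OK) : ℂ) / ((p : OK) : ℂ)) := by
    intro s u
    set x := rep u.val with hx
    set y := invMod (p ^ k) x with hy
    set v := ts s * u with hv
    have hvval : v.val = Ideal.Quotient.mk (Ideal.span {p ^ k}) (lam s * x) := by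
      rw [hv, Units.val_mul, RingHom.map_mul]
      congr 1
      rw [hx, rep_mk]
    have hxv : p ^ k ∣ rep v.val - lam s * x := by
      rw [← mk_eq_mk_iff, rep_mk, hvval]
    have hrepvx : p ^ (k - 1) ∣ rep v.val - x := by
      have h1 : rep v.val - x = (rep v.val - lam s * x) + p ^ (k - 1) * (rep s * x) := by
        rw [hlam]; ring
      rw [h1]
      exact dvd_add (dvd_trans (pow_dvd_pow p (by omega)) hxv) (Dvd.dvd.mul_right dvd_rfl _)
    have hrepvx1 : p ∣ rep v.val - x := dvd_trans (dvd_pow_self p (by omega : k - 1 ≠ 0)) hrepvx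
    -- character part
    have hchi : cubicCharP p (rep v.val) = cubicCharP p x := cubicCharP_congr hp h3 hrepvx1
    -- exponential part
    have hinvu : Ideal.Quotient.mk (Ideal.span {p ^ k}) y = ↑u⁻¹ := invMod_spec _ u
    set wv := invMod (p ^ k) (rep v.val) with hwv
    have hinvv : Ideal.Quotient.mk (Ideal.span {p ^ k}) wv = ↑v⁻¹ := invMod_spec _ v
    have hvinv : Ideal.Quotient.mk (Ideal.span {p ^ k}) wv =
        Ideal.Quotient.mk (Ideal.span {p ^ k}) (mu s * y) := by
      rw [hinvv, hv, mul_inv_rev, Units.val_mul, RingHom.map_mul, hinvu]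
      rw [mul_comm]
      congr 1
    have hwd : p ^ k ∣ wv - mu s * y := mk_eq_mk_iff.mp hvinv
    have hbw : p ^ k ∣ b * wv - (b * y + (-(b * y) * rep s) * p ^ (k - 1)) := by
      have h1 : b * wv - (b * y + (-(b * y) * rep s) * p ^ (k - 1)) = b * (wv - mu s * y) := by
        rw [hmu]; ring
      rw [h1]
      exact Dvd.dvd.mul_left hwd b
    have heC : eC (((b * wv : OK) : ℂ) / ((p ^ k : OK) : ℂ)) =
        eC (((b * y : OK) : ℂ) / ((p ^ k : OK) : ℂ)) *
          eC (((-(b * y) * rep s : OK) : ℂ) / ((p : OK) : ℂ)) := by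
      rw [eC_div_congr hpk0 hbw]
      have hsplit : ((b * y + (-(b * y) * rep s) * p ^ (k - 1) : OK) : ℂ) =
          ((b * y : OK) : ℂ) + (((-(b * y) * rep s) * p ^ (k - 1) : OK) : ℂ) := by
        push_cast; ring
      rw [hsplit, add_div, eC_add]
      congr 1
      congr 1
      -- (c * p^(k-1))/(p^k) = c/p
      have hcast1 : (((-(b * y) * rep s) * p ^ (k - 1) : OK) : ℂ) =
          ((-(b * y) * rep s : OK) : ℂ) * ((p : OK) : ℂ) ^ (k - 1) := by push_cast; ring
      have hcast2 : ((p ^ k : OK) : ℂ) = ((p : OK) : ℂ) ^ (k - 1) * ((p : OK) : ℂ) := by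
        push_cast
        rw [← pow_succ, Nat.sub_add_cancel hk1]
      rw [hcast1, hcast2, mul_comm (((p : OK) : ℂ) ^ (k - 1)) _,
        mul_div_mul_right _ _ (pow_ne_zero _ (coe_ne_zero hp0))]
    -- T part
    have hT : T (z * rep v.val) 0 (p ^ h) = T (z * x) 0 (p ^ h) := by
      have hdvdz : ∀ m : ℕ, (p ^ m : OK) ∣ rep v.val - x → (p ^ m : OK) ∣ z * rep v.val - z * x := by
        intro m hm
        have : z * rep v.val - z * x = z * (rep v.val - x) := by ring
        rw [this]; exact Dvd.dvd.mul_left hm z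
      rcases Nat.eq_zero_or_pos l with hl0 | hl1
      · -- k = h = 2
        have hk2 : k = 2 ∧ h = 2 := by omega
        obtain ⟨hk2, hh2⟩ := hk2
        rw [hh2]
        have hpv : ¬ p ∣ rep v.val := by
          apply not_dvd_of_unit_mk hp hk1
          rw [rep_mk]
          exact ⟨v, rfl⟩
        have hA : ¬ p ∣ z * rep v.val := fun hd =>
          (hp.dvd_mul.mp hd).elim hnz hpv
        apply T_congr_sq hp h3 hA
        have := hdvdz 1 (by simpa using hrepvx1)
        simpa using this
      · -- h + 1 ≤ k
        apply T_congr (pow_ne_zero _ hp0)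
        exact dvd_trans (pow_dvd_pow p (by omega : h ≤ k - 1)) (hdvdz (k - 1) hrepvx)
    -- combine
    rw [hF]
    simp only []
    rw [hchi, heC, hT]
    ring
  -- reindexing invariance
  have equalU : ∀ s : OK ⧸ Ideal.span {p}, (∑ u, F (ts s * u)) = ∑ u, F u := by
    intro s
    exact Equiv.sum_comp (Equiv.mulLeft (ts s)) F
  -- character sums vanish
  have hchar : ∀ u : (OK ⧸ Ideal.span {p ^ k})ˣ,
      (∑ s : OK ⧸ Ideal.span {p},
        eC (((-(b * invMod (p ^ k) (rep u.val)) * rep s : OK) : ℂ) / ((p : OK) : ℂ))) = 0 := by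
    intro u
    have hny : ¬ p ∣ invMod (p ^ k) (rep u.val) :=
      not_dvd_of_unit_mk hp hk1 ⟨u⁻¹, (invMod_spec _ u).symm⟩
    have hna : ¬ p ∣ -(b * invMod (p ^ k) (rep u.val)) := by
      rw [dvd_neg]
      intro hd
      exact (hp.dvd_mul.mp hd).elim hnb hny
    have := char_sum p (-(b * invMod (p ^ k) (rep u.val))) hp0 hna
    rw [finsum_eq_sum_of_fintype] at this
    exact this
  -- finale
  have hsum : ((Fintype.card (OK ⧸ Ideal.span {p}) : ℂ)) * (∑ u, F u) = 0 := by
    calc ((Fintype.card (OK ⧸ Ideal.span {p}) : ℂ)) * (∑ u, F u)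
        = ∑ _s : OK ⧸ Ideal.span {p}, (∑ u, F u) := by
          rw [Finset.sum_const, Finset.card_univ, nsmul_eq_mul]
      _ = ∑ s : OK ⧸ Ideal.span {p}, (∑ u, F (ts s * u)) := by
          apply Finset.sum_congr rfl
          intro s _
          rw [equalU s]
      _ = ∑ u, ∑ s : OK ⧸ Ideal.span {p}, F (ts s * u) := Finset.sum_comm
      _ = ∑ u, F u * (∑ s : OK ⧸ Ideal.span {p},
            eC (((-(b * invMod (p ^ k) (rep u.val)) * rep s : OK) : ℂ) / ((p : OK) : ℂ))) := by
          apply Finset.sum_congr rfl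
          intro u _
          rw [Finset.mul_sum]
          apply Finset.sum_congr rfl
          intro s _
          exact pointwise s u
      _ = 0 := by
          apply Finset.sum_eq_zero
          intro u _
          rw [hchar u, mul_zero]
  have hcard : ((Fintype.card (OK ⧸ Ideal.span {p}) : ℂ)) ≠ 0 :=
    Nat.cast_ne_zero.mpr Fintype.card_ne_zero
  exact (mul_eq_zero.mp hsum).resolve_left hcard

end CubicSeries
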